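/- Fix an integer M ≥ 2 and δ ∈ (0, 1 - 1/M). Let α = 1/M + δ and β = 1/M - δ/(M-1). Then α² / (α² + (M-1)β²) > α and α² / (α² + (M-1)β²) < 1. -/
import Mathlib


theorem stmt_4 (M : ℕ) (hM : 2 ≤ M) (δ : ℝ) (hδ : δ ∈ Set.Ioo (0:ℝ) (1 - 1/(M:ℝ)))
    (α β : ℝ) (hα : α = 1/(M:ℝ) + δ) (hβ : β = 1/(M:ℝ) - δ/((M:ℝ) - 1)) :
    α < α^2 / (α^2 + ((M:ℝ) - 1) * β^2) ∧ α^2 / (α^2 + ((M:ℝ) - 1) * β^2) < 1 := by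
  obtain ⟨hδ0, hδ1⟩ := hδ
  have hm : (2:ℝ) ≤ (M:ℝ) := by exact_mod_cast hM
  have hm1 : (0:ℝ) < (M:ℝ) - 1 := by linarith
  have hm0 : (0:ℝ) < (M:ℝ) := by linarith
  have hβ0 : 0 < β := by
    rw [hβ]
    rw [sub_pos, div_lt_div_iff₀ hm1 hm0]
    have h1 := mul_lt_mul_of_pos_right hδ1 hm0
    have h2 : (1 - 1/(M:ℝ)) * (M:ℝ) = (M:ℝ) - 1 := by field_simp
    nlinarith
  have hαβ : β < α := by
    rw [hα, hβ]
    have : 0 < δ/((M:ℝ)-1) := div_pos hδ0 hm1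
    linarith
  have hα0 : 0 < α := lt_trans hβ0 hαβ
  have hsum : α + ((M:ℝ) - 1) * β = 1 := by
    rw [hα, hβ]; field_simp; ring
  have hD : 0 < α^2 + ((M:ℝ) - 1) * β^2 := by positivity
  constructor
  · rw [lt_div_iff₀ hD]
    nlinarith [mul_pos hm1 (mul_pos hβ0 (sub_pos.mpr hαβ))]
  · rw [div_lt_one hD]
    nlinarith [mul_pos hm1 (mul_pos hβ0 hβ0)]
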